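/- Let B and Y be Banach spaces subspaces of a common vector space, with the property that no sequence in B ∩ Y converges in Y to 0 and in B to a nonzero vector. Then every nonzero x ∈ B has a neighborhood U in B such that the Y-norm has a positive lower bound on U ∩ Y; consequently, for any compact set K ⊂ B \ {0}, the Y-norm has a positive lower bound on K ∩ Y. -/
import Mathlib


/-- Reformulation of the sequence condition: every nonzero `x ∈ B` has a neighborhood `U`
on which the `Y`-norm has a positive lower bound on `U ∩ Y`; consequently the same holds
on `K ∩ Y` for every compact `K ⊂ B \ {0}`. -/
theorem sequence_condition_reformulation
    {B Y V : Type*} [NormedAddCommGroup B] [NormedSpace ℝ B] [CompleteSpace B]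
    [NormedAddCommGroup Y] [NormedSpace ℝ Y] [CompleteSpace Y]
    [AddCommGroup V] [Module ℝ V]
    (iB : B →ₗ[ℝ] V) (iY : Y →ₗ[ℝ] V)
    (hiB : Function.Injective iB) (hiY : Function.Injective iY)
    (hseq : ∀ (u : ℕ → B) (w : ℕ → Y) (b : B),
      (∀ n, iB (u n) = iY (w n)) →
      Filter.Tendsto w Filter.atTop (nhds 0) →
      Filter.Tendsto u Filter.atTop (nhds b) → b = 0) :
    (∀ x : B, x ≠ 0 → ∃ U ∈ nhds x, ∃ m > (0:ℝ),
      ∀ b ∈ U, ∀ y : Y, iY y = iB b → m ≤ ‖y‖) ∧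
    (∀ K : Set B, IsCompact K → (0:B) ∉ K → ∃ m > (0:ℝ),
      ∀ b ∈ K, ∀ y : Y, iY y = iB b → m ≤ ‖y‖) := by
  have part1 : ∀ x : B, x ≠ 0 → ∃ U ∈ nhds x, ∃ m > (0:ℝ),
      ∀ b ∈ U, ∀ y : Y, iY y = iB b → m ≤ ‖y‖ := by
    intro x hx
    by_contra h
    push_neg at h
    have H : ∀ n : ℕ, ∃ b : B, ‖b - x‖ < 1/(n+1) ∧
        ∃ y : Y, iY y = iB b ∧ ‖y‖ < 1/(n+1) := by
      intro n
      obtain ⟨b, hb, y, hy, hyn⟩ := h (Metric.ball x (1/(n+1)))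
        (Metric.ball_mem_nhds x (by positivity)) (1/(n+1)) (by positivity)
      exact ⟨b, by simpa [dist_eq_norm] using hb, y, hy, hyn⟩
    choose u hu w hw hwn using H
    have hlim : Filter.Tendsto (fun n : ℕ => 1/((n:ℝ)+1)) Filter.atTop (nhds 0) :=
      tendsto_one_div_add_atTop_nhds_zero_nat
    have hw0 : Filter.Tendsto w Filter.atTop (nhds 0) := by
      rw [tendsto_zero_iff_norm_tendsto_zero]
      exact squeeze_zero (fun n => norm_nonneg _) (fun n => (hwn n).le) hlim
    have hux : Filter.Tendsto u Filter.atTop (nhds x) := by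
      rw [tendsto_iff_norm_sub_tendsto_zero]
      exact squeeze_zero (fun n => norm_nonneg _) (fun n => (hu n).le) hlim
    exact hx (hseq u w x (fun n => (hw n).symm) hw0 hux)
  refine ⟨part1, fun K hK hK0 => ?_⟩
  rcases K.eq_empty_or_nonempty with rfl | hne
  · exact ⟨1, one_pos, fun b hb => absurd hb (Set.notMem_empty b)⟩
  have hmem : ∀ x : B, ∃ U : Set B, ∃ m : ℝ,
      x ∈ K → (U ∈ nhds x ∧ 0 < m ∧ ∀ b ∈ U, ∀ y : Y, iY y = iB b → m ≤ ‖y‖) := by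
    intro x
    by_cases hx : x ∈ K
    · obtain ⟨U, hU, m, hm, hb⟩ := part1 x (fun h => hK0 (h ▸ hx))
      exact ⟨U, m, fun _ => ⟨hU, hm, hb⟩⟩
    · exact ⟨Set.univ, 1, fun h => absurd h hx⟩
  choose U m hUm using hmem
  obtain ⟨t, htK, ht⟩ := hK.elim_nhds_subcover U (fun x hx => (hUm x hx).1)
  have htne : t.Nonempty := by
    obtain ⟨k, hk⟩ := hne
    obtain ⟨x, hx, -⟩ := Set.mem_iUnion₂.1 (ht hk)
    exact ⟨x, hx⟩
  refine ⟨t.inf' htne m, ?_, ?_⟩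
  · exact (Finset.lt_inf'_iff htne).2 fun x hx => (hUm x (htK x hx)).2.1
  · intro b hb y hy
    obtain ⟨x, hx, hbx⟩ := Set.mem_iUnion₂.1 (ht hb)
    exact le_trans (Finset.inf'_le m hx) ((hUm x (htK x hx)).2.2 b hbx y hy)
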